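/- For αβ > 1/2 with β > 0, the variance of the two-index Riesz FOU is (1/π) ∫₀^∞ (k^{2β} + λ^{2β})^{−α} dk = Γ(1/(2β)) Γ(α − 1/(2β)) λ^{1−2αβ} / (2πβ Γ(α)). -/

import Mathlib

open Real MeasureTheory

lemma real_beta_Ioo {a b : ℝ} (ha : 0 < a) (hb : 0 < b) :
    ∫ x in Set.Ioo (0:ℝ) 1, x ^ (a - 1) * (1 - x) ^ (b - 1)
      = Real.Gamma a * Real.Gamma b / Real.Gamma (a + b) := by
  have key : Complex.Gamma a * Complex.Gamma b
      = Complex.Gamma (a + b) * Complex.betaIntegral a b := by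
    have := Complex.Gamma_mul_Gamma_eq_betaIntegral
      (s := (a:ℂ)) (t := (b:ℂ)) (by simpa using ha) (by simpa using hb)
    simpa using this
  have hbeta : Complex.betaIntegral a b
      = ((∫ x in (0:ℝ)..1, x ^ (a - 1) * (1 - x) ^ (b - 1) : ℝ) : ℂ) := by
    rw [Complex.betaIntegral]
    rw [← intervalIntegral.integral_ofReal]
    apply intervalIntegral.integral_congr
    intro x hx
    rw [Set.uIcc_of_le (by norm_num : (0:ℝ) ≤ 1)] at hx
    have hx0 : 0 ≤ x := hx.1
    have hx1 : 0 ≤ 1 - x := by linarith [hx.2]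
    push_cast
    rw [Complex.ofReal_cpow hx0, Complex.ofReal_cpow hx1]
    push_cast
    ring
  have hGamma : ∀ s : ℝ, Complex.Gamma (s : ℂ) = (Real.Gamma s : ℂ) :=
    Complex.Gamma_ofReal
  rw [hbeta, hGamma, hGamma, show ((a:ℂ) + b) = ((a + b : ℝ) : ℂ) by push_cast; ring,
    hGamma, ← Complex.ofReal_mul, ← Complex.ofReal_mul] at key
  have key2 : Real.Gamma a * Real.Gamma b
      = Real.Gamma (a + b) * ∫ x in (0:ℝ)..1, x ^ (a - 1) * (1 - x) ^ (b - 1) :=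
    Complex.ofReal_inj.mp key
  have hI : ∫ x in (0:ℝ)..1, x ^ (a - 1) * (1 - x) ^ (b - 1)
      = ∫ x in Set.Ioo (0:ℝ) 1, x ^ (a - 1) * (1 - x) ^ (b - 1) := by
    rw [intervalIntegral.integral_of_le (by norm_num : (0:ℝ) ≤ 1),
      ← MeasureTheory.integral_Ioc_eq_integral_Ioo]
  have hG : Real.Gamma (a + b) ≠ 0 := (Real.Gamma_pos_of_pos (by linarith)).ne'
  rw [hI] at key2
  field_simp
  linarith [key2]

lemma real_beta_Ioi {a b : ℝ} (ha : 0 < a) (hb : 0 < b) :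
    ∫ y in Set.Ioi (0:ℝ), y ^ (a - 1) * (1 + y) ^ (-(a + b))
      = Real.Gamma a * Real.Gamma b / Real.Gamma (a + b) := by
  rw [← real_beta_Ioo ha hb]
  have himg : (fun y : ℝ => y / (1 + y)) '' Set.Ioi 0 = Set.Ioo 0 1 := by
    ext x
    constructor
    · rintro ⟨y, hy, rfl⟩
      have hy' : (0:ℝ) < y := hy
      have h1y : (0:ℝ) < 1 + y := by linarith
      exact ⟨div_pos hy' h1y, (div_lt_one h1y).mpr (by linarith)⟩
    · rintro ⟨hx0, hx1⟩
      refine ⟨x / (1 - x), div_pos hx0 (by linarith), ?_⟩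
      have h1x : (1:ℝ) - x ≠ 0 := by linarith
      field_simp
      ring
  have hderiv : ∀ y ∈ Set.Ioi (0:ℝ),
      HasDerivWithinAt (fun y : ℝ => y / (1 + y)) (((1 + y) ^ 2)⁻¹) (Set.Ioi 0) y := by
    intro y hy
    have h1y : (1:ℝ) + y ≠ 0 := by have : (0:ℝ) < y := hy; linarith
    have := (hasDerivAt_id y).div ((hasDerivAt_const y 1).add (hasDerivAt_id y)) h1y
    exact this.hasDerivWithinAt.congr_deriv (by simp only [Pi.add_apply, id_eq]; ring)
  have hinj : Set.InjOn (fun y : ℝ => y / (1 + y)) (Set.Ioi 0) := by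
    intro y1 h1 y2 h2 he
    have hy1 : (0:ℝ) < y1 := h1
    have hy2 : (0:ℝ) < y2 := h2
    have e1 : (1:ℝ) + y1 ≠ 0 := by linarith
    have e2 : (1:ℝ) + y2 ≠ 0 := by linarith
    field_simp at he
    linarith
  have := MeasureTheory.integral_image_eq_integral_abs_deriv_smul
    measurableSet_Ioi hderiv hinj (fun x => x ^ (a - 1) * (1 - x) ^ (b - 1))
  rw [himg] at this
  rw [this]
  apply MeasureTheory.setIntegral_congr_fun measurableSet_Ioi
  intro y hy
  have hy' : (0:ℝ) < y := hy
  have h1y : (0:ℝ) < 1 + y := by linarith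
  have h1 : (1:ℝ) - y / (1 + y) = (1 + y)⁻¹ := by field_simp; ring
  have h2 : |((1 + y) ^ 2)⁻¹| = (1 + y) ^ (-2 : ℝ) := by
    rw [abs_of_pos (by positivity), ← Real.rpow_natCast (1 + y) 2,
      ← Real.rpow_neg h1y.le]
    norm_num
  simp only [smul_eq_mul, h1, h2]
  rw [Real.div_rpow hy'.le h1y.le, Real.inv_rpow h1y.le, div_eq_mul_inv,
    ← Real.rpow_neg h1y.le (a-1), ← Real.rpow_neg h1y.le (b-1),
    show (-(a+b)) = -2 + (-(a-1) + -(b-1)) by ring,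
    Real.rpow_add h1y, Real.rpow_add h1y]
  ring

theorem stmt11 (α β lam : ℝ) (hα : 0 < α) (hβ : 0 < β) (hlam : 0 < lam)
    (hαβ : 1/2 < α * β) :
    (1/π) * ∫ k in Set.Ioi (0:ℝ), (k ^ (2*β) + lam ^ (2*β)) ^ (-α)
      = Real.Gamma (1/(2*β)) * Real.Gamma (α - 1/(2*β)) * lam ^ (1 - 2*α*β)
          / (2 * π * β * Real.Gamma α) := by
  have h2β : (0:ℝ) < 2 * β := by linarith
  have ha : (0:ℝ) < 1 / (2 * β) := by positivity
  have hb : (0:ℝ) < α - 1 / (2 * β) := by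
    rw [sub_pos, div_lt_iff₀ h2β]
    linarith
  -- Step 1: scaling k = lam * t
  have step1 : ∫ k in Set.Ioi (0:ℝ), (k ^ (2*β) + lam ^ (2*β)) ^ (-α)
      = lam ^ (1 - 2*α*β) * ∫ t in Set.Ioi (0:ℝ), (t ^ (2*β) + 1) ^ (-α) := by
    have h0 := MeasureTheory.integral_comp_mul_left_Ioi
      (fun k => (k ^ (2*β) + lam ^ (2*β)) ^ (-α)) 0 hlam
    simp only [mul_zero, smul_eq_mul] at h0
    have h0' : (∫ k in Set.Ioi (0:ℝ), (k ^ (2*β) + lam ^ (2*β)) ^ (-α))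
        = lam * ∫ x in Set.Ioi (0:ℝ), ((lam * x) ^ (2*β) + lam ^ (2*β)) ^ (-α) := by
      rw [h0]; field_simp
    rw [h0', ← integral_const_mul, ← integral_const_mul]
    apply MeasureTheory.setIntegral_congr_fun measurableSet_Ioi
    intro t ht
    have ht' : (0:ℝ) < t := ht
    have h1 : (lam * t) ^ (2*β) = lam ^ (2*β) * t ^ (2*β) :=
      Real.mul_rpow hlam.le ht'.le
    have h2 : lam ^ (2*β) * t ^ (2*β) + lam ^ (2*β) = lam ^ (2*β) * (t ^ (2*β) + 1) := by
      ring
    have h3 : (lam ^ (2*β) * (t ^ (2*β) + 1)) ^ (-α)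
        = lam ^ (2*β * -α) * (t ^ (2*β) + 1) ^ (-α) := by
      rw [Real.mul_rpow (by positivity) (by positivity), ← Real.rpow_mul hlam.le]
    dsimp only
    rw [h1, h2, h3]
    have : lam ^ (1 - 2*α*β) = lam * lam ^ (2*β * -α) := by
      rw [show (1 - 2*α*β) = 1 + 2*β * -α by ring, Real.rpow_add hlam, Real.rpow_one]
    rw [this]
    ring
  -- Step 2: substitution y = t ^ (2β)
  have step2 : ∫ t in Set.Ioi (0:ℝ), (t ^ (2*β) + 1) ^ (-α)
      = (2*β)⁻¹ * ∫ y in Set.Ioi (0:ℝ),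
          y ^ (1/(2*β) - 1) * (1 + y) ^ (-α) := by
    have key := MeasureTheory.integral_comp_rpow_Ioi
      (fun y => (2*β)⁻¹ * (y ^ (1/(2*β) - 1) * (1 + y) ^ (-α))) (p := 2*β) h2β.ne'
    simp only [smul_eq_mul] at key
    rw [← integral_const_mul, ← key]
    apply MeasureTheory.setIntegral_congr_fun measurableSet_Ioi
    intro x hx
    have hx' : (0:ℝ) < x := hx
    have hxp : (0:ℝ) < x ^ (2*β) := Real.rpow_pos_of_pos hx' _
    dsimp only
    rw [abs_of_pos h2β, ← Real.rpow_mul hx'.le]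
    have hmul : (2*β) * (1/(2*β) - 1) = 1 - 2*β := by field_simp
    rw [hmul, show (x ^ (2*β) + 1) = (1 + x ^ (2*β)) by ring]
    have h4 : x ^ (2*β - 1) * x ^ (1 - 2*β) = 1 := by
      rw [← Real.rpow_add hx']; norm_num
    have h5 : (2*β) * (2*β)⁻¹ = 1 := mul_inv_cancel₀ h2β.ne'
    calc (1 + x ^ (2*β)) ^ (-α)
        = ((2*β) * (2*β)⁻¹) * ((x ^ (2*β-1) * x ^ (1-2*β))
            * (1 + x ^ (2*β)) ^ (-α)) := by rw [h4, h5]; ring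
      _ = 2*β * x ^ (2*β - 1) * ((2*β)⁻¹ * (x ^ (1-2*β) * (1 + x ^ (2*β)) ^ (-α))) := by
          ring
  -- Step 3: beta integral
  have hab : 1/(2*β) + (α - 1/(2*β)) = α := by ring
  have step3 : ∫ y in Set.Ioi (0:ℝ), y ^ (1/(2*β) - 1) * (1 + y) ^ (-α)
      = Real.Gamma (1/(2*β)) * Real.Gamma (α - 1/(2*β)) / Real.Gamma α := by
    have := real_beta_Ioi ha hb
    rw [hab] at this
    exact this
  rw [step1, step2, step3]
  have hπ : (0:ℝ) < π := Real.pi_pos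
  have hG : Real.Gamma α ≠ 0 := (Real.Gamma_pos_of_pos hα).ne'
  field_simp
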